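/- arXiv:1502.06923 — 2 statements merged into one kernel-verified Lean document; each statement's English description precedes it below -/
import Mathlib

section
/- Let p = 3n + 2 be a prime with n ≥ 0, and let K = 𝔽_p(t). Then the pair (x, y) = ( t^{n+2}/(t−1)^{2n} , t²/(t−1)^{3n} ) satisfies the Weierstrass equation y² + t²(t−1)²·y = x³ over K. -/
/-- For a prime `p = 3n+2`, the pair `(t^{n+2}/(t−1)^{2n}, t²/(t−1)^{3n})`
satisfies `y² + t²(t−1)²y = x³` over `𝔽_p(t)`. -/
theorem section_P_on_isotrivial_fibration (n : ℕ) [Fact (Nat.Prime (3 * n + 2))] :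
    let t : RatFunc (ZMod (3 * n + 2)) := RatFunc.X
    let x := t ^ (n + 2) / (t - 1) ^ (2 * n)
    let y := t ^ 2 / (t - 1) ^ (3 * n)
    y ^ 2 + t ^ 2 * (t - 1) ^ 2 * y = x ^ 3 := by
  intro t x y
  have ht : t - 1 ≠ 0 := by
    intro h
    have h1 : t = 1 := by linear_combination h
    have h2 : (Polynomial.X : Polynomial (ZMod (3 * n + 2))) = 1 := by
      apply RatFunc.algebraMap_injective
      simpa [RatFunc.algebraMap_X] using h1
    simpa [Polynomial.coeff_one] using congrArg (Polynomial.coeff · 1) h2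
  haveI : CharP (RatFunc (ZMod (3 * n + 2))) (3 * n + 2) :=
    charP_of_injective_algebraMap' (ZMod (3 * n + 2)) (A := RatFunc (ZMod (3 * n + 2))) (3 * n + 2)
  have hfrob : (t - 1) ^ (3 * n + 2) = t ^ (3 * n + 2) - 1 := by
    simpa using sub_pow_char t 1 (p := 3 * n + 2)
  have hkey : t ^ 4 + t ^ 4 * (t - 1) ^ (3 * n + 2) = t ^ (3 * n + 2 + 4) := by
    rw [hfrob]; ring
  simp only [x, y]
  field_simp
  linear_combination ((t - 1) ^ (6 * n)) * hkey
end

section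
/- For every natural number n, the monic degree-22 integer polynomial μ_n(x) = x¹¹·φ_n(x + 1/x) satisfies μ_n(1) = −729(3n+2)² < 0, and since μ_n is monic (so μ_n(x) → +∞ as x → +∞), μ_n has a real root α with α > 1. -/
open Polynomial

/-- The degree-11 polynomial `φ_n` from which `μ(g*) = x¹¹ φ_n(x + 1/x)` is built. -/
noncomputable def phi (n : ℕ) : Polynomial ℤ :=
  X ^ 11 + C (-1308 - 702 * (n : ℤ) ^ 2 - 1929 * n) * X ^ 10
    + C (378 * (n : ℤ) ^ 2 - 540 * n - 1404) * X ^ 9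
    + C (6696 * (n : ℤ) ^ 2 + 19467 * n + 12900) * X ^ 8
    - C (3780 * (n : ℤ) ^ 2 - 5157 * n - 13414) * X ^ 7
    - C (22545 * (n : ℤ) ^ 2 + 70167 * n + 44646) * X ^ 6
    + C (12987 * (n : ℤ) ^ 2 - 16794 * n - 43992) * X ^ 5
    + C (107487 * (n : ℤ) + 31536 * n ^ 2 + 63852) * X ^ 4
    - C (17442 * (n : ℤ) ^ 2 - 20925 * n - 56020) * X ^ 3
    - C (16443 * (n : ℤ) ^ 2 + 64281 * n + 34254) * X ^ 2
    + C (-6804 * (n : ℤ) - 20304 + 7128 * n ^ 2) * X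
    + C (6804 + 11016 * (n : ℤ) + 2187 * n ^ 2)

/-- The degree-22 polynomial `μ_n(x) = x¹¹ φ_n(x + 1/x)`. -/
noncomputable def mu (n : ℕ) : Polynomial ℤ :=
  ∑ i ∈ Finset.range 12, C ((phi n).coeff i) * X ^ (11 - i) * (X ^ 2 + 1) ^ i

/-- `μ_n(1) = −729(3n+2)² < 0`, and since `μ_n` is monic it has a real root `α > 1`. -/
theorem mu_has_real_root_gt_one (n : ℕ) :
    (mu n).eval 1 = -729 * (3 * (n : ℤ) + 2) ^ 2 ∧
      (mu n).eval 1 < 0 ∧ (mu n).Monic ∧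
      ∃ α : ℝ, 1 < α ∧ Polynomial.aeval α (mu n) = 0 := by
  have heval : (mu n).eval 1 = -729 * (3 * (n : ℤ) + 2) ^ 2 := by
    simp only [mu, eval_finset_sum, eval_mul, eval_pow, eval_add, eval_one, eval_C, eval_X]
    simp only [Finset.sum_range_succ, Finset.sum_range_zero]
    simp only [phi, coeff_add, coeff_sub, coeff_C_mul, coeff_X_pow, coeff_C, coeff_X]
    norm_num
    ring
  have hneg : (mu n).eval 1 < 0 := by
    rw [heval]
    have : (0:ℤ) < (3 * (n : ℤ) + 2) ^ 2 := by positivity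
    nlinarith
  have hmonic : (mu n).Monic := by
    unfold mu
    simp only [Finset.sum_range_succ, Finset.sum_range_zero]
    simp only [phi, coeff_add, coeff_sub, coeff_C_mul, coeff_X_pow, coeff_C, coeff_X]
    norm_num
    monicity!
  refine ⟨heval, hneg, hmonic, ?_⟩
  set p : Polynomial ℝ := (mu n).map (Int.castRingHom ℝ) with hp
  have hpm : p.Monic := hmonic.map _
  have hkey : ∀ x : ℝ, Polynomial.aeval x (mu n) = p.eval x := fun x => by
    rw [aeval_def, eval_map]; rfl
  have hpneg : p.eval 1 < 0 := by
    have h1 : p.eval ((1:ℤ):ℝ) = (((mu n).eval 1 : ℤ) : ℝ) := eval_intCast_map _ _ _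
    rw [show ((1:ℤ):ℝ) = (1:ℝ) by norm_num] at h1
    rw [h1]
    exact_mod_cast hneg
  have hdeg : 0 < p.degree := by
    by_contra h
    push_neg at h
    have hc := Polynomial.eq_C_of_degree_le_zero h
    have : p.eval 1 = p.coeff 0 := by rw [hc]; simp
    have hlc : p.coeff 0 = 1 := by
      have := hpm.leadingCoeff
      rwa [Polynomial.leadingCoeff, hc, natDegree_C, coeff_C_zero] at this
    rw [this, hlc] at hpneg
    norm_num at hpneg
  have ht : Filter.Tendsto (fun x => p.eval x) Filter.atTop Filter.atTop :=
    p.tendsto_atTop_of_leadingCoeff_nonneg hdeg (by rw [hpm.leadingCoeff]; norm_num)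
  obtain ⟨b, hb0, hb1⟩ := ((ht.eventually_gt_atTop 0).and (Filter.eventually_gt_atTop 1)).exists
  have hmem : (0:ℝ) ∈ Set.Ioc (p.eval 1) (p.eval b) := ⟨hpneg, hb0.le⟩
  obtain ⟨α, hα, hαeval⟩ := intermediate_value_Ioc hb1.le
    (p.continuous_aeval.continuousOn.congr (fun x _ => by simp [aeval_def, eval_map]; rfl)) hmem
  exact ⟨α, hα.1, by rw [hkey]; exact hαeval⟩
end
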